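/- In a (d+1)-layered DAG, if predicted weights alpha-hat satisfy max_v max(alpha-hat_v / alpha*_v, alpha*_v / alpha-hat_v) <= eta for weights alpha* achieving flow value at least (1-eps) OPT via proportional allocation, then proportional allocation with alpha-hat achieves flow value at least (1-eps)/eta^{2d} times OPT. The proof is by induction on layers: min(Alloc-hat_a, C_a) >= (1/eta^{2j}) min(Alloc*_a, C_a) for every vertex a in layer j. -/

import Mathlib

open Finset

/-- Proportional allocation in a layered DAG: `LayerAlloc NI N lay C w j v` is the amount
of flow arriving at vertex `v`, assuming `v` lies in layer `j+1`. Layer-1 vertices receive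
flow from the unit-supply impressions; a vertex in layer `j+2` receives from each layer
`j+1` vertex `u` its feasible load `min (Alloc u) (C u)` split proportionally to the
weights of `u`'s out-neighbors. -/
noncomputable def LayerAlloc {I V : Type*} [Fintype I] [Fintype V] [DecidableEq V]
    (NI : I → Finset V) (N : V → Finset V) (lay : V → ℕ) (C : V → ℝ)
    (w : V → ℝ) : ℕ → V → ℝ
  | 0 => fun v => ∑ i : I, if v ∈ NI i then w v / ∑ v' ∈ NI i, w v' else 0
  | (j + 1) => fun v => ∑ u : V,
      if v ∈ N u ∧ lay u = j + 1 then
        min (LayerAlloc NI N lay C w j u) (C u) * (w v / ∑ v' ∈ N u, w v')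
      else 0

/-- The value of the proportional flow with weights `w`: total feasible load of the last
layer `d`. -/
noncomputable def LayerVal {I V : Type*} [Fintype I] [Fintype V] [DecidableEq V]
    (NI : I → Finset V) (N : V → Finset V) (lay : V → ℕ) (C : V → ℝ)
    (d : ℕ) (w : V → ℝ) : ℝ :=
  ∑ v : V, if lay v = d then min (LayerAlloc NI N lay C w (d - 1) v) (C v) else 0

lemma LayerAlloc_nonneg {I V : Type*} [Fintype I] [Fintype V] [DecidableEq V]
    (NI : I → Finset V) (N : V → Finset V) (lay : V → ℕ) (C : V → ℝ)
    (w : V → ℝ) (hw : ∀ v, 0 < w v) (hC : ∀ v, 0 < C v) :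
    ∀ j v, 0 ≤ LayerAlloc NI N lay C w j v := by
  intro j
  induction j with
  | zero =>
    intro v
    rw [LayerAlloc]
    refine Finset.sum_nonneg fun i _ => ?_
    split
    · exact div_nonneg (hw v).le (Finset.sum_nonneg fun v' _ => (hw v').le)
    · exact le_rfl
  | succ j ih =>
    intro v
    rw [LayerAlloc]
    refine Finset.sum_nonneg fun u _ => ?_
    split
    · exact mul_nonneg (le_min (ih u) (hC u).le)
        (div_nonneg (hw v).le (Finset.sum_nonneg fun v' _ => (hw v').le))
    · exact le_rfl

lemma ratio_robust {V : Type*} [DecidableEq V] (s : Finset V) (v : V) (hv : v ∈ s)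
    (αh αs : V → ℝ) (hαh : ∀ v, 0 < αh v) (hαs : ∀ v, 0 < αs v)
    (η : ℝ) (hη : 1 ≤ η)
    (hratio : ∀ v, αh v ≤ η * αs v ∧ αs v ≤ η * αh v) :
    (η ^ 2)⁻¹ * (αs v / ∑ v' ∈ s, αs v') ≤ αh v / ∑ v' ∈ s, αh v' := by
  have hS : 0 < ∑ v' ∈ s, αs v' := Finset.sum_pos (fun v' _ => hαs v') ⟨v, hv⟩
  have hH : 0 < ∑ v' ∈ s, αh v' := Finset.sum_pos (fun v' _ => hαh v') ⟨v, hv⟩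
  have hle : (∑ v' ∈ s, αh v') ≤ η * ∑ v' ∈ s, αs v' := by
    rw [Finset.mul_sum]
    exact Finset.sum_le_sum fun v' _ => (hratio v').1
  have hv' : αs v ≤ η * αh v := (hratio v).2
  have hη0 : (0:ℝ) < η := lt_of_lt_of_le one_pos hη
  have heq : (η ^ 2)⁻¹ * (αs v / ∑ v' ∈ s, αs v') = αs v / (η ^ 2 * ∑ v' ∈ s, αs v') := by
    field_simp
  rw [heq, div_le_div_iff₀ (by positivity) hH]
  nlinarith [(hαh v).le, (hαs v).le, hS.le, hH.le,
    mul_le_mul hv' hle hH.le (mul_pos hη0 (hαh v)).le]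

lemma min_robust (c x y C : ℝ) (hc0 : 0 ≤ c) (hc1 : c ≤ 1) (hC : 0 < C)
    (h : c * y ≤ x) : c * min y C ≤ min x C := by
  refine le_min ?_ ?_
  · exact le_trans (by nlinarith [min_le_left y C]) h
  · rcases le_or_gt 0 (min y C) with h0 | h0
    · calc c * min y C ≤ 1 * min y C := by nlinarith
        _ = min y C := one_mul _
        _ ≤ C := min_le_right y C
    · nlinarith

lemma LayerAlloc_robust {I V : Type*} [Fintype I] [Fintype V] [DecidableEq V]
    (NI : I → Finset V) (N : V → Finset V) (lay : V → ℕ) (C : V → ℝ)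
    (hC : ∀ v, 0 < C v)
    (αh αs : V → ℝ) (hαh : ∀ v, 0 < αh v) (hαs : ∀ v, 0 < αs v)
    (η : ℝ) (hη : 1 ≤ η)
    (hratio : ∀ v, αh v ≤ η * αs v ∧ αs v ≤ η * αh v) :
    ∀ j v, ((η ^ 2)⁻¹) ^ (j + 1) * LayerAlloc NI N lay C αs j v ≤
      LayerAlloc NI N lay C αh j v := by
  have hη0 : (0:ℝ) < η := lt_of_lt_of_le one_pos hη
  have hc0 : (0:ℝ) ≤ (η ^ 2)⁻¹ := by positivity
  have hc1 : (η ^ 2)⁻¹ ≤ 1 := by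
    rw [inv_le_one_iff₀]; right; nlinarith
  intro j
  induction j with
  | zero =>
    intro v
    rw [LayerAlloc, LayerAlloc, Finset.mul_sum]
    refine Finset.sum_le_sum fun i _ => ?_
    split
    · rename_i hmem
      simpa using ratio_robust (NI i) v hmem αh αs hαh hαs η hη hratio
    · simp
  | succ j ih =>
    intro v
    rw [LayerAlloc, LayerAlloc, Finset.mul_sum]
    refine Finset.sum_le_sum fun u _ => ?_
    split
    · rename_i hmem
      have hmin : ((η ^ 2)⁻¹) ^ (j + 1) * min (LayerAlloc NI N lay C αs j u) (C u) ≤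
          min (LayerAlloc NI N lay C αh j u) (C u) :=
        min_robust _ _ _ _ (by positivity) (pow_le_one₀ hc0 hc1) (hC u) (ih u)
      have hrat := ratio_robust (N u) v hmem.1 αh αs hαh hαs η hη hratio
      have h1 : (0:ℝ) ≤ (η ^ 2)⁻¹ * (αs v / ∑ v' ∈ (N u), αs v') :=
        mul_nonneg hc0 (div_nonneg (hαs v).le (Finset.sum_nonneg fun v' _ => (hαs v').le))
      have h2 : (0:ℝ) ≤ min (LayerAlloc NI N lay C αh j u) (C u) :=
        le_min (LayerAlloc_nonneg NI N lay C αh hαh hC j u) (hC u).le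
      calc ((η ^ 2)⁻¹) ^ (j + 1 + 1) *
            (min (LayerAlloc NI N lay C αs j u) (C u) * (αs v / ∑ v' ∈ N u, αs v'))
          = (((η ^ 2)⁻¹) ^ (j + 1) * min (LayerAlloc NI N lay C αs j u) (C u)) *
            ((η ^ 2)⁻¹ * (αs v / ∑ v' ∈ N u, αs v')) := by ring
        _ ≤ min (LayerAlloc NI N lay C αh j u) (C u) * (αh v / ∑ v' ∈ N u, αh v') :=
            mul_le_mul hmin hrat h1 h2
    · simp

theorem layered_parameter_robustness
    {I V : Type*} [Fintype I] [Fintype V] [DecidableEq V]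
    (NI : I → Finset V) (N : V → Finset V) (lay : V → ℕ) (C : V → ℝ)
    (d : ℕ) (hd : 1 ≤ d)
    (hlay : ∀ v, 1 ≤ lay v ∧ lay v ≤ d)
    (hNI : ∀ i, (NI i).Nonempty ∧ ∀ v ∈ NI i, lay v = 1)
    (hN : ∀ u : V, lay u < d → (N u).Nonempty)
    (hNlay : ∀ u v : V, v ∈ N u → lay v = lay u + 1)
    (hC : ∀ v, 0 < C v)
    (αh αs : V → ℝ) (hαh : ∀ v, 0 < αh v) (hαs : ∀ v, 0 < αs v)
    (η : ℝ) (hη : 1 ≤ η)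
    (hratio : ∀ v, αh v ≤ η * αs v ∧ αs v ≤ η * αh v)
    (ε OPT : ℝ) (hε : 0 ≤ ε) (hε1 : ε ≤ 1) (hOPT : 0 ≤ OPT)
    (hstar : (1 - ε) * OPT ≤ LayerVal NI N lay C d αs) :
    ((1 - ε) / η ^ (2 * d)) * OPT ≤ LayerVal NI N lay C d αh := by
  have hη0 : (0:ℝ) < η := lt_of_lt_of_le one_pos hη
  have hc0 : (0:ℝ) ≤ (η ^ 2)⁻¹ := by positivity
  have hc1 : (η ^ 2)⁻¹ ≤ 1 := by
    rw [inv_le_one_iff₀]; right; nlinarith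
  have hdd : d - 1 + 1 = d := Nat.succ_pred_eq_of_pos hd
  have hkey : ((η ^ 2)⁻¹) ^ d * LayerVal NI N lay C d αs ≤ LayerVal NI N lay C d αh := by
    unfold LayerVal
    rw [Finset.mul_sum]
    refine Finset.sum_le_sum fun v _ => ?_
    split
    · have := LayerAlloc_robust NI N lay C hC αh αs hαh hαs η hη hratio (d - 1) v
      rw [hdd] at this
      exact min_robust _ _ _ _ (by positivity) (pow_le_one₀ hc0 hc1) (hC v) this
    · simp
  have heq : ((1 - ε) / η ^ (2 * d)) * OPT = ((η ^ 2)⁻¹) ^ d * ((1 - ε) * OPT) := by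
    rw [pow_mul]
    field_simp
    rw [one_div, inv_pow]
    field_simp
  rw [heq]
  calc ((η ^ 2)⁻¹) ^ d * ((1 - ε) * OPT)
      ≤ ((η ^ 2)⁻¹) ^ d * LayerVal NI N lay C d αs :=
        mul_le_mul_of_nonneg_left hstar (by positivity)
    _ ≤ LayerVal NI N lay C d αh := hkey
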